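/- (Quantitative lower bound in the counterexample.) In the setting of the Rademacher sequence (ε_i)_{i∈Z}, define Z_n(ε) = 1{ε_{−2n} = −1}·1{ε_{−2n+1} = −1}·1{ε_{−2n+2} = 1}⋯1{ε_{−1} = 1}·ε_0 for n ≥ 1 (for n = 1, Z_1(ε) = 1{ε_{−2} = −1}1{ε_{−1} = −1}ε_0), and let f = Σ_{n≥1} c_n Z_n(ε) for real numbers (c_n) with Σ_{n≥1} c_n² ‖Z_n(ε)‖₂² < ∞ (so f ∈ L², F_0-measurable, E(f | F_{−1}) = 0). Then for every i ≤ −1, writing i = −(2k−1) or i = −2k with k ∈ N, the physical dependence measure satisfies δ_i(f)² ≥ (1/2) Σ_{j≥k} c_j² ‖Z_j(ε)‖₂², and consequently Σ_{i≤−1} δ_i(f)² ≥ Σ_{j≥1} j · c_j² ‖Z_j(ε)‖₂². -/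

import Mathlib

open MeasureTheory ProbabilityTheory Filter
open scoped ENNReal NNReal

noncomputable section

/-- The σ-algebra `F_k = σ(ε_j : j ≤ k)` on `{−1,1}^ℤ ⊆ ℝ^ℤ`. -/
def radF (k : ℤ) : MeasurableSpace (ℤ → ℝ) :=
  ⨆ j : ℤ, ⨆ _ : j ≤ k, MeasurableSpace.comap (fun ω => ω j) inferInstance

/-- The coordinates of `P` are i.i.d. Rademacher: `P(ε_i = 1) = P(ε_i = −1) = 1/2`. -/
def IsRademacherMeasure (P : Measure (ℤ → ℝ)) : Prop :=
  IsProbabilityMeasure P ∧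
    iIndepFun (fun i ω => ω i : ℤ → (ℤ → ℝ) → ℝ) P ∧
    ∀ i : ℤ, P.map (fun ω => ω i)
      = (2⁻¹ : ℝ≥0∞) • Measure.dirac (1 : ℝ) + (2⁻¹ : ℝ≥0∞) • Measure.dirac (-1 : ℝ)

/-- The physical dependence measure `δ_i(f) = ‖f(ε) − f(ε^{*i})‖₂`, computed on the enlarged
space `Ω × Ω` carrying `(ε, ε^*)` with law `P ⊗ P`; `ε^{*i}` is `ε` with coordinate `i`
replaced by `ε_i^*`. -/
def physDelta (P : Measure (ℤ → ℝ)) (i : ℤ) (f : (ℤ → ℝ) → ℝ) : ℝ≥0∞ :=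
  eLpNorm (fun p : (ℤ → ℝ) × (ℤ → ℝ) => f p.1 - f (Function.update p.1 i (p.2 i))) 2
    (P.prod P)


/-- `Z_n(ε) = 1{ε_{−2n} = −1} 1{ε_{−2n+1} = −1} 1{ε_{−2n+2} = 1} ⋯ 1{ε_{−1} = 1} ε_0`. -/
def radZ (n : ℕ) : (ℤ → ℝ) → ℝ := fun ω =>
  (if ω (-(2 * (n : ℤ))) = -1 then 1 else 0) * (if ω (-(2 * (n : ℤ)) + 1) = -1 then 1 else 0)
    * (∏ j ∈ Finset.Icc (-(2 * (n : ℤ)) + 2) (-1), if ω j = 1 then (1 : ℝ) else 0) * ω 0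

end

noncomputable section Aux


lemma sq_eLpNorm {α : Type*} [MeasurableSpace α] (h : α → ℝ) (μ : Measure α) :
    eLpNorm h 2 μ ^ 2 = ∫⁻ x, (‖h x‖₊ : ℝ≥0∞) ^ 2 ∂μ := by
  rw [eLpNorm_eq_lintegral_rpow_enorm_toReal two_ne_zero ENNReal.ofNat_ne_top]
  rw [ENNReal.toReal_ofNat]
  rw [← ENNReal.rpow_natCast _ 2, ← ENNReal.rpow_mul]
  norm_num
  simp only [enorm_eq_nnnorm]

lemma nnorm_sq_eq (x : ℝ) : (‖x‖₊ : ℝ≥0∞) ^ 2 = ENNReal.ofReal (x ^ 2) := by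
  rw [← enorm_eq_nnnorm, ← ofReal_norm_eq_enorm, ← ENNReal.ofReal_pow (norm_nonneg x)]
  congr 1
  rw [Real.norm_eq_abs, sq_abs]

lemma measurable_radZ (n : ℕ) : Measurable (radZ n) := by
  unfold radZ
  apply Measurable.mul
  apply Measurable.mul
  apply Measurable.mul
  · exact Measurable.ite ((measurable_pi_apply _) (measurableSet_singleton _)) measurable_const measurable_const
  · exact Measurable.ite ((measurable_pi_apply _) (measurableSet_singleton _)) measurable_const measurable_const
  · exact Finset.measurable_prod _ fun t _ =>
      Measurable.ite ((measurable_pi_apply _) (measurableSet_singleton _)) measurable_const measurable_const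
  · exact measurable_pi_apply 0

lemma radZ_ne_zero {n : ℕ} {ω : ℤ → ℝ} (h : radZ n ω ≠ 0) :
    ω (-(2 * (n : ℤ))) = -1 ∧ ω (-(2 * (n : ℤ)) + 1) = -1 ∧
      (∀ t ∈ Finset.Icc (-(2 * (n : ℤ)) + 2) (-1), ω t = 1) ∧ radZ n ω = ω 0 := by
  unfold radZ at h
  simp only [ne_eq, mul_eq_zero, not_or] at h
  obtain ⟨⟨⟨h1, h2⟩, h3⟩, _⟩ := h
  have e1 : ω (-(2 * (n : ℤ))) = -1 := by
    by_contra hx; exact h1 (if_neg hx)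
  have e2 : ω (-(2 * (n : ℤ)) + 1) = -1 := by
    by_contra hx; exact h2 (if_neg hx)
  have e3 : ∀ t ∈ Finset.Icc (-(2 * (n : ℤ)) + 2) (-1), ω t = 1 := by
    intro t ht
    by_contra hx
    exact h3 (Finset.prod_eq_zero ht (if_neg hx))
  refine ⟨e1, e2, e3, ?_⟩
  unfold radZ
  rw [if_pos e1, if_pos e2, Finset.prod_eq_one (fun t ht => if_pos (e3 t ht))]
  ring

lemma radZ_eq_zero₁ {n : ℕ} {ω : ℤ → ℝ} (h : ω (-(2 * (n : ℤ))) ≠ -1) : radZ n ω = 0 := by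
  unfold radZ; rw [if_neg h]; ring

lemma radZ_eq_zero₂ {n : ℕ} {ω : ℤ → ℝ} (h : ω (-(2 * (n : ℤ)) + 1) ≠ -1) : radZ n ω = 0 := by
  unfold radZ; rw [if_neg h]; ring

lemma radZ_eq_zero₃ {n : ℕ} {ω : ℤ → ℝ} {t : ℤ} (ht : t ∈ Finset.Icc (-(2 * (n : ℤ)) + 2) (-1))
    (h : ω t ≠ 1) : radZ n ω = 0 := by
  unfold radZ; rw [Finset.prod_eq_zero ht (by rw [if_neg h])]; ring

lemma radZ_disjoint {m n : ℕ} (hm : 1 ≤ m) (hn : 1 ≤ n) (hmn : m ≠ n) {ω : ℤ → ℝ}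
    (h : radZ n ω ≠ 0) : radZ m ω = 0 := by
  obtain ⟨e1, e2, e3, _⟩ := radZ_ne_zero h
  rcases lt_or_gt_of_ne hmn with hlt | hgt
  · apply radZ_eq_zero₁
    have hmem : -(2 * (m : ℤ)) ∈ Finset.Icc (-(2 * (n : ℤ)) + 2) (-1) := by
      rw [Finset.mem_Icc]; omega
    rw [e3 _ hmem]; norm_num
  · apply radZ_eq_zero₃ (t := -(2 * (n : ℤ)))
    · rw [Finset.mem_Icc]; omega
    · rw [e1]; norm_num


lemma tsum_f_eq {c : ℕ → ℝ} {j : ℕ} (hj : 1 ≤ j) {ω : ℤ → ℝ} (h : radZ j ω ≠ 0) :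
    ∑' n : ℕ, c (n + 1) * radZ (n + 1) ω = c j * radZ j ω := by
  have := tsum_eq_single (L := SummationFilter.unconditional ℕ) (f := fun n : ℕ => c (n + 1) * radZ (n + 1) ω) (j - 1)
    (fun n hn => by
      rw [radZ_disjoint (m := n + 1) (by omega) (by omega) (by omega) h]; ring)
  rw [this]
  have hj1 : j - 1 + 1 = j := by omega
  rw [hj1]

lemma tsum_f_zero {c : ℕ → ℝ} {ω : ℤ → ℝ} (h : ∀ m : ℕ, 1 ≤ m → radZ m ω = 0) :
    ∑' n : ℕ, c (n + 1) * radZ (n + 1) ω = 0 := by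
  have : ∀ n : ℕ, c (n + 1) * radZ (n + 1) ω = 0 := fun n => by
    rw [h (n + 1) (by omega)]; ring
  simp [this]

lemma update_radZ_zero {k j : ℕ} (hk : 1 ≤ k) (hkj : k ≤ j) {i : ℤ}
    (hi : i = -(2 * (k : ℤ)) + 1 ∨ i = -(2 * (k : ℤ)))
    {ω : ℤ → ℝ} (h : radZ j ω ≠ 0) {b : ℝ} (hb1 : b = 1 ∨ b = -1) (hb2 : b ≠ ω i) :
    ∀ m : ℕ, 1 ≤ m → radZ m (Function.update ω i b) = 0 := by
  obtain ⟨e1, e2, e3, _⟩ := radZ_ne_zero h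
  intro m hm
  have hupd : ∀ t : ℤ, t ≠ i → Function.update ω i b t = ω t := fun t ht =>
    Function.update_of_ne ht _ _
  have hupdi : Function.update ω i b i = b := Function.update_self _ _ _
  rcases lt_trichotomy m j with hlt | heq | hgt
  · by_cases hi2 : i = -(2 * (m : ℤ))
    · apply radZ_eq_zero₂
      rw [hupd _ (by omega), e3 _ (by rw [Finset.mem_Icc]; omega)]
      norm_num
    · apply radZ_eq_zero₁
      rw [hupd _ (by omega), e3 _ (by rw [Finset.mem_Icc]; omega)]
      norm_num
  · subst heq
    by_cases hkm : k = m
    · subst hkm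
      rcases hi with hi | hi
      · apply radZ_eq_zero₂
        rw [← hi, hupdi]
        have : ω i = -1 := by rw [hi]; exact e2
        rcases hb1 with hb | hb
        · rw [hb]; norm_num
        · exact absurd (hb.trans this.symm) hb2
      · apply radZ_eq_zero₁
        rw [← hi, hupdi]
        have : ω i = -1 := by rw [hi]; exact e1
        rcases hb1 with hb | hb
        · rw [hb]; norm_num
        · exact absurd (hb.trans this.symm) hb2
    · -- k < m, i is inside the all-ones region of Z_m
      have hmem : i ∈ Finset.Icc (-(2 * (m : ℤ)) + 2) (-1) := by
        rw [Finset.mem_Icc]; omega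
      apply radZ_eq_zero₃ hmem
      rw [hupdi]
      have : ω i = 1 := e3 _ hmem
      rcases hb1 with hb | hb
      · exact absurd (hb.trans this.symm) hb2
      · rw [hb]; norm_num
  · by_cases hi2 : i = -(2 * (j : ℤ))
    · apply radZ_eq_zero₃ (t := -(2 * (j : ℤ)) + 1)
      · rw [Finset.mem_Icc]; omega
      · rw [hupd _ (by omega), e2]; norm_num
    · apply radZ_eq_zero₃ (t := -(2 * (j : ℤ)))
      · rw [Finset.mem_Icc]; omega
      · rw [hupd _ (Ne.symm hi2), e1]; norm_num

variable {P : Measure (ℤ → ℝ)}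

lemma coord_ae (hmap : ∀ i : ℤ, P.map (fun ω => ω i)
      = (2⁻¹ : ℝ≥0∞) • Measure.dirac (1 : ℝ) + (2⁻¹ : ℝ≥0∞) • Measure.dirac (-1 : ℝ))
    (i : ℤ) : ∀ᵐ ω ∂P, ω i = 1 ∨ ω i = -1 := by
  have hs : MeasurableSet ({1, -1} : Set ℝ) :=
    (measurableSet_singleton _).union (measurableSet_singleton _)
  rw [ae_iff]
  have hset : {ω : ℤ → ℝ | ¬(ω i = 1 ∨ ω i = -1)} = (fun ω : ℤ → ℝ => ω i) ⁻¹' ({1, -1} : Set ℝ)ᶜ := by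
    ext ω; simp [Set.mem_preimage]
  rw [hset, ← Measure.map_apply (measurable_pi_apply i) hs.compl, hmap i]
  simp [Measure.dirac_apply' _ hs.compl, Set.indicator_apply]

lemma flip_prob (hmap : ∀ i : ℤ, P.map (fun ω => ω i)
      = (2⁻¹ : ℝ≥0∞) • Measure.dirac (1 : ℝ) + (2⁻¹ : ℝ≥0∞) • Measure.dirac (-1 : ℝ))
    (i : ℤ) (a : ℝ) : 2⁻¹ ≤ P {x : ℤ → ℝ | ¬ x i = a} := by
  have hs : MeasurableSet ({a} : Set ℝ) := measurableSet_singleton a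
  have hset : {x : ℤ → ℝ | ¬ x i = a} = (fun x : ℤ → ℝ => x i) ⁻¹' ({a} : Set ℝ)ᶜ := by
    ext x; simp
  rw [hset, ← Measure.map_apply (measurable_pi_apply i) hs.compl, hmap i]
  by_cases ha : a = 1
  · have h2 : (-1 : ℝ) ∈ ({a} : Set ℝ)ᶜ := by simp [ha]; norm_num
    calc (2⁻¹ : ℝ≥0∞) = 2⁻¹ * Measure.dirac (-1 : ℝ) ({a} : Set ℝ)ᶜ := by
          rw [Measure.dirac_apply' _ hs.compl, Set.indicator_of_mem h2]; simp
      _ ≤ _ := by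
          simp only [Measure.add_apply, Measure.smul_apply, smul_eq_mul]
          first | exact le_add_self | exact le_self_add
  · have h2 : (1 : ℝ) ∈ ({a} : Set ℝ)ᶜ := by simp; exact fun h => ha h.symm
    calc (2⁻¹ : ℝ≥0∞) = 2⁻¹ * Measure.dirac (1 : ℝ) ({a} : Set ℝ)ᶜ := by
          rw [Measure.dirac_apply' _ hs.compl, Set.indicator_of_mem h2]; simp
      _ ≤ _ := by
          simp only [Measure.add_apply, Measure.smul_apply, smul_eq_mul]
          first | exact le_add_self | exact le_self_add

lemma ae_fst_prod [IsProbabilityMeasure P] {Q : (ℤ → ℝ) → Prop} (h : ∀ᵐ ω ∂P, Q ω) :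
    ∀ᵐ p ∂P.prod P, Q p.1 :=
  ae_of_ae_map measurable_fst.aemeasurable
    (by rwa [Measure.map_fst_prod, measure_univ, one_smul])

lemma ae_snd_prod [IsProbabilityMeasure P] {Q : (ℤ → ℝ) → Prop} (h : ∀ᵐ ω ∂P, Q ω) :
    ∀ᵐ p ∂P.prod P, Q p.2 :=
  ae_of_ae_map measurable_snd.aemeasurable
    (by rwa [Measure.map_snd_prod, measure_univ, one_smul])

def termF (c : ℕ → ℝ) (i : ℤ) (j : ℕ) : (ℤ → ℝ) × (ℤ → ℝ) → ℝ≥0∞ := fun p =>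
  ENNReal.ofReal (c j ^ 2) * (‖radZ j p.1‖₊ : ℝ≥0∞) ^ 2 * (if p.2 i = p.1 i then 0 else 1)

lemma termF_meas (c : ℕ → ℝ) (i : ℤ) (j : ℕ) : Measurable (termF c i j) := by
  unfold termF
  have hE : MeasurableSet {p : (ℤ → ℝ) × (ℤ → ℝ) | p.2 i = p.1 i} :=
    measurableSet_eq_fun (by exact (measurable_pi_apply i).comp measurable_snd)
      (by exact (measurable_pi_apply i).comp measurable_fst)
  refine Measurable.mul (Measurable.const_mul ?_ _) ?_
  · exact (((measurable_radZ j).comp measurable_fst).enorm).pow_const 2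
  · exact Measurable.ite hE measurable_const measurable_const

lemma termF_lintegral_ge [IsProbabilityMeasure P]
    (hmap : ∀ i : ℤ, P.map (fun ω => ω i)
      = (2⁻¹ : ℝ≥0∞) • Measure.dirac (1 : ℝ) + (2⁻¹ : ℝ≥0∞) • Measure.dirac (-1 : ℝ))
    (c : ℕ → ℝ) (i : ℤ) (j : ℕ) :
    2⁻¹ * (ENNReal.ofReal (c j ^ 2) * eLpNorm (radZ j) 2 P ^ 2)
      ≤ ∫⁻ p, termF c i j p ∂(P.prod P) := by
  rw [lintegral_prod _ (termF_meas c i j).aemeasurable]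
  have hCne : ∀ ω : ℤ → ℝ,
      ENNReal.ofReal (c j ^ 2) * (‖radZ j ω‖₊ : ℝ≥0∞) ^ 2 ≠ ∞ := fun ω =>
    ENNReal.mul_ne_top ENNReal.ofReal_ne_top (by simp [ENNReal.pow_ne_top])
  have hinner : ∀ ω : ℤ → ℝ,
      (ENNReal.ofReal (c j ^ 2) * (‖radZ j ω‖₊ : ℝ≥0∞) ^ 2) * 2⁻¹
        ≤ ∫⁻ x, termF c i j (ω, x) ∂P := by
    intro ω
    have hre : ∀ x : ℤ → ℝ, termF c i j (ω, x)
        = (ENNReal.ofReal (c j ^ 2) * (‖radZ j ω‖₊ : ℝ≥0∞) ^ 2)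
            * (if x i = ω i then 0 else 1) := fun x => rfl
    have hmset : MeasurableSet {x : ℤ → ℝ | ¬ x i = ω i} := by
      have hs : {x : ℤ → ℝ | ¬ x i = ω i} = (fun x : ℤ → ℝ => x i) ⁻¹' ({ω i} : Set ℝ)ᶜ := by
        ext x; simp
      rw [hs]; exact (measurable_pi_apply i) (measurableSet_singleton _).compl
    have hind : (fun x : ℤ → ℝ => if x i = ω i then (0 : ℝ≥0∞) else 1)
        = Set.indicator {x : ℤ → ℝ | ¬ x i = ω i} 1 := by
      funext x; rw [Set.indicator_apply]
      by_cases hx : x i = ω i <;> simp [hx]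
    calc (ENNReal.ofReal (c j ^ 2) * (‖radZ j ω‖₊ : ℝ≥0∞) ^ 2) * 2⁻¹
        ≤ (ENNReal.ofReal (c j ^ 2) * (‖radZ j ω‖₊ : ℝ≥0∞) ^ 2)
            * P {x : ℤ → ℝ | ¬ x i = ω i} :=
          mul_le_mul_right (flip_prob hmap i (ω i)) _
      _ = ∫⁻ x, termF c i j (ω, x) ∂P := by
          simp only [hre]
          rw [lintegral_const_mul' _ _ (hCne ω), hind, lintegral_indicator_one hmset]
  have h1 : ∫⁻ ω, ((ENNReal.ofReal (c j ^ 2) * (‖radZ j ω‖₊ : ℝ≥0∞) ^ 2) * 2⁻¹) ∂P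
      ≤ ∫⁻ ω, ∫⁻ x, termF c i j (ω, x) ∂P ∂P := lintegral_mono hinner
  refine le_trans (le_of_eq ?_) h1
  rw [lintegral_mul_const' _ _ (by norm_num),
    lintegral_const_mul' _ _ ENNReal.ofReal_ne_top, sq_eLpNorm]
  ring

def natSubtypeEquiv (k : ℕ) : ℕ ≃ {j : ℕ // k ≤ j} where
  toFun m := ⟨m + k, Nat.le_add_left k m⟩
  invFun j := j.1 - k
  left_inv m := by simp
  right_inv j := by
    rcases j with ⟨j, hj⟩
    ext
    simp
    omega

lemma part1 [IsProbabilityMeasure P]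
    (hmap : ∀ i : ℤ, P.map (fun ω => ω i)
      = (2⁻¹ : ℝ≥0∞) • Measure.dirac (1 : ℝ) + (2⁻¹ : ℝ≥0∞) • Measure.dirac (-1 : ℝ))
    (c : ℕ → ℝ) (f : (ℤ → ℝ) → ℝ) (hf : ∀ ω, f ω = ∑' n : ℕ, c (n + 1) * radZ (n + 1) ω)
    (k : ℕ) (hk : 1 ≤ k) (i : ℤ) (hi : i = -(2 * (k : ℤ) - 1) ∨ i = -(2 * (k : ℤ))) :
    2⁻¹ * (∑' j : {j : ℕ // k ≤ j}, ENNReal.ofReal (c j ^ 2) * eLpNorm (radZ j) 2 P ^ 2)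
      ≤ physDelta P i f ^ 2 := by
  have hi' : i = -(2 * (k : ℤ)) + 1 ∨ i = -(2 * (k : ℤ)) := by
    rcases hi with h | h
    · left; omega
    · right; omega
  have hae : ∀ᵐ p ∂P.prod P, (∑' m : ℕ, termF c i (m + k) p)
      ≤ (‖f p.1 - f (Function.update p.1 i (p.2 i))‖₊ : ℝ≥0∞) ^ 2 := by
    have h1 : ∀ᵐ ω ∂P, ∀ t : ℤ, ω t = 1 ∨ ω t = -1 :=
      ae_all_iff.mpr fun t => coord_ae hmap t
    filter_upwards [ae_fst_prod h1, ae_snd_prod (coord_ae hmap i)] with p hp1 hp2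
    by_cases he : p.2 i = p.1 i
    · have hz : ∀ m : ℕ, termF c i (m + k) p = 0 := fun m => by
        unfold termF; rw [if_pos he]; ring
      rw [tsum_congr hz, tsum_zero]
      exact zero_le
    · by_cases hz : ∃ j : ℕ, k ≤ j ∧ radZ j p.1 ≠ 0
      · obtain ⟨j₀, hkj₀, hj₀⟩ := hz
        have h10 : 1 ≤ j₀ := le_trans hk hkj₀
        have hz0 : radZ j₀ p.1 = p.1 0 := (radZ_ne_zero hj₀).2.2.2
        have hsq : (p.1 0) ^ 2 = 1 := by
          rcases hp1 0 with h | h <;> rw [h] <;> norm_num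
        have hother : ∀ m : ℕ, m ≠ j₀ - k → termF c i (m + k) p = 0 := by
          intro m hm
          have : radZ (m + k) p.1 = 0 :=
            radZ_disjoint (by omega) h10 (by omega) hj₀
          unfold termF; rw [this]; simp
        rw [tsum_eq_single (j₀ - k) hother]
        have hng : j₀ - k + k = j₀ := by omega
        rw [hng]
        have hlhs : termF c i j₀ p = ENNReal.ofReal (c j₀ ^ 2) := by
          unfold termF
          rw [if_neg he, hz0, nnorm_sq_eq, hsq]
          simp
        have hf1 : f p.1 = c j₀ * p.1 0 := by
          rw [hf p.1, tsum_f_eq h10 hj₀, hz0]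
        have hf2 : f (Function.update p.1 i (p.2 i)) = 0 := by
          rw [hf _]
          exact tsum_f_zero (update_radZ_zero hk hkj₀ hi' hj₀ hp2 he)
        rw [hlhs, hf1, hf2, sub_zero, nnorm_sq_eq, mul_pow, hsq, mul_one]
      · push_neg at hz
        have hzz : ∀ m : ℕ, termF c i (m + k) p = 0 := fun m => by
          unfold termF; rw [hz (m + k) (Nat.le_add_left k m)]; simp
        rw [tsum_congr hzz, tsum_zero]
        exact zero_le
  have hequiv : (∑' j : {j : ℕ // k ≤ j}, ENNReal.ofReal (c j ^ 2) * eLpNorm (radZ j) 2 P ^ 2)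
      = ∑' m : ℕ, ENNReal.ofReal (c (m + k) ^ 2) * eLpNorm (radZ (m + k)) 2 P ^ 2 :=
    ((natSubtypeEquiv k).tsum_eq
      (fun j : {j : ℕ // k ≤ j} => ENNReal.ofReal (c j ^ 2) * eLpNorm (radZ j) 2 P ^ 2)).symm
  rw [physDelta, sq_eLpNorm, hequiv, ← ENNReal.tsum_mul_left]
  calc ∑' m : ℕ, 2⁻¹ * (ENNReal.ofReal (c (m + k) ^ 2) * eLpNorm (radZ (m + k)) 2 P ^ 2)
      ≤ ∑' m : ℕ, ∫⁻ p, termF c i (m + k) p ∂(P.prod P) :=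
        ENNReal.tsum_le_tsum fun m => termF_lintegral_ge hmap c i (m + k)
    _ = ∫⁻ p, ∑' m : ℕ, termF c i (m + k) p ∂(P.prod P) :=
        (lintegral_tsum fun m => (termF_meas c i (m + k)).aemeasurable).symm
    _ ≤ _ := lintegral_mono_ae hae

lemma tsum_arith (a : ℕ → ℝ≥0∞) :
    ∑' j : ℕ, ((j : ℝ≥0∞) + 1) * a (j + 1)
      = ∑' m : ℕ, ∑' j : {j : ℕ // m + 1 ≤ j}, a ↑j := by
  have h1 : ∀ m : ℕ, (∑' j : {j : ℕ // m + 1 ≤ j}, a ↑j)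
      = ∑' j : ℕ, (if m + 1 ≤ j then a j else 0) := by
    intro m
    rw [← tsum_subtype_eq_of_support_subset
      (s := {j : ℕ | m + 1 ≤ j}) (f := fun j : ℕ => if m + 1 ≤ j then a j else 0)
      (fun j hj => by by_contra hc; simp only [Function.mem_support] at hj; exact hj (if_neg hc))]
    exact tsum_congr fun j => by rw [if_pos j.2]
  calc ∑' j : ℕ, ((j : ℝ≥0∞) + 1) * a (j + 1)
      = ∑' j : ℕ, ∑' m : ℕ, (if m + 1 ≤ j + 1 then a (j + 1) else 0) := by
        refine tsum_congr fun j => ?_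
        rw [tsum_eq_sum (s := Finset.range (j + 1))
          (fun m hm => if_neg (by simp at hm ⊢; omega))]
        rw [Finset.sum_congr rfl (fun m hm => if_pos (by simp at hm; omega))]
        rw [Finset.sum_const, Finset.card_range, nsmul_eq_mul]
        push_cast
        ring
    _ = ∑' m : ℕ, ∑' j : ℕ, (if m + 1 ≤ j + 1 then a (j + 1) else 0) := ENNReal.tsum_comm
    _ = ∑' m : ℕ, ∑' j : ℕ, (if m + 1 ≤ j then a j else 0) := by
        refine tsum_congr fun m => ?_
        rw [tsum_eq_zero_add' ENNReal.summable (f := fun j => if m + 1 ≤ j then a j else 0)]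
        rw [if_neg (by omega), zero_add]
    _ = ∑' m : ℕ, ∑' j : {j : ℕ // m + 1 ≤ j}, a ↑j := tsum_congr fun m => (h1 m).symm

lemma half_double_sum (S : ℕ → ℝ≥0∞) :
    ∑' n : ℕ, 2⁻¹ * S (n / 2 + 1) = ∑' m : ℕ, S (m + 1) := by
  rw [← ((Nat.divModEquiv 2).symm.tsum_eq (f := fun n : ℕ => 2⁻¹ * S (n / 2 + 1)))]
  rw [ENNReal.tsum_prod']
  refine tsum_congr fun m => ?_
  rw [tsum_fintype]
  have hv : ∀ r : Fin 2, ((Nat.divModEquiv 2).symm (m, r) / 2 + 1) = m + 1 := by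
    intro r
    have hr := r.isLt
    simp only [Nat.divModEquiv, Equiv.coe_fn_symm_mk]
    omega
  rw [Finset.sum_congr rfl (fun r _ => by rw [hv r])]
  rw [Fin.sum_univ_two, ← two_mul, ← mul_assoc,
    ENNReal.mul_inv_cancel two_ne_zero ENNReal.ofNat_ne_top, one_mul]

def negIntEquiv : ℕ ≃ {i : ℤ // i ≤ -1} where
  toFun n := ⟨-(n : ℤ) - 1, by omega⟩
  invFun i := (-(i : ℤ) - 1).toNat
  left_inv n := by simp
  right_inv i := by
    rcases i with ⟨i, hi⟩
    ext
    simp only []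
    rw [Int.toNat_of_nonneg (by omega)]
    ring

theorem statement18'
    (P : Measure (ℤ → ℝ))
    (hprob : IsProbabilityMeasure P)
    (hmap : ∀ i : ℤ, P.map (fun ω => ω i)
      = (2⁻¹ : ℝ≥0∞) • Measure.dirac (1 : ℝ) + (2⁻¹ : ℝ≥0∞) • Measure.dirac (-1 : ℝ))
    (c : ℕ → ℝ)
    (f : (ℤ → ℝ) → ℝ) (hf : ∀ ω, f ω = ∑' n : ℕ, c (n + 1) * radZ (n + 1) ω) :
    (∀ k : ℕ, 1 ≤ k → ∀ i : ℤ, (i = -(2 * (k : ℤ) - 1) ∨ i = -(2 * (k : ℤ))) →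
        2⁻¹ * (∑' j : {j : ℕ // k ≤ j}, ENNReal.ofReal (c j ^ 2) * eLpNorm (radZ j) 2 P ^ 2)
          ≤ physDelta P i f ^ 2) ∧
      (∑' j : ℕ, ((j : ℝ≥0∞) + 1) * ENNReal.ofReal (c (j + 1) ^ 2)
            * eLpNorm (radZ (j + 1)) 2 P ^ 2)
        ≤ ∑' i : {i : ℤ // i ≤ -1}, physDelta P i f ^ 2 := by
  constructor
  · intro k hk i hi
    exact part1 hmap c f hf k hk i hi
  · set S : ℕ → ℝ≥0∞ :=
      fun k => ∑' j : {j : ℕ // k ≤ j}, ENNReal.ofReal (c j ^ 2) * eLpNorm (radZ j) 2 P ^ 2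
      with hS
    have hδ : ∀ n : ℕ, 2⁻¹ * S (n / 2 + 1) ≤ physDelta P (-(n : ℤ) - 1) f ^ 2 := by
      intro n
      refine part1 hmap c f hf (n / 2 + 1) (by omega) _ ?_
      rcases Nat.even_or_odd n with ⟨m, hm⟩ | ⟨m, hm⟩
      · left; subst hm; push_cast; omega
      · right; subst hm; push_cast; omega
    calc (∑' j : ℕ, ((j : ℝ≥0∞) + 1) * ENNReal.ofReal (c (j + 1) ^ 2)
            * eLpNorm (radZ (j + 1)) 2 P ^ 2)
        = ∑' j : ℕ, ((j : ℝ≥0∞) + 1)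
            * (ENNReal.ofReal (c (j + 1) ^ 2) * eLpNorm (radZ (j + 1)) 2 P ^ 2) :=
          tsum_congr fun j => mul_assoc _ _ _
      _ = ∑' m : ℕ, S (m + 1) :=
          tsum_arith fun j => ENNReal.ofReal (c j ^ 2) * eLpNorm (radZ j) 2 P ^ 2
      _ = ∑' n : ℕ, 2⁻¹ * S (n / 2 + 1) := (half_double_sum S).symm
      _ ≤ ∑' n : ℕ, physDelta P (-(n : ℤ) - 1) f ^ 2 := ENNReal.tsum_le_tsum hδ
      _ = ∑' i : {i : ℤ // i ≤ -1}, physDelta P ↑i f ^ 2 :=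
          negIntEquiv.tsum_eq fun i : {i : ℤ // i ≤ -1} => physDelta P ↑i f ^ 2

end Aux

/-- (Quantitative lower bound in the counterexample.) For i.i.d. Rademacher
coordinates, let `f = ∑_{n≥1} c_n Z_n` with `∑_{n≥1} c_n² ‖Z_n‖₂² < ∞`. Then for every
`i ≤ −1`, written as `i = −(2k−1)` or `i = −2k` with `k ≥ 1`,
`δ_i(f)² ≥ (1/2) ∑_{j≥k} c_j² ‖Z_j‖₂²`, and consequently
`∑_{i≤−1} δ_i(f)² ≥ ∑_{j≥1} j c_j² ‖Z_j‖₂²`. -/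
theorem statement18
    (P : Measure (ℤ → ℝ)) (hP : IsRademacherMeasure P)
    (c : ℕ → ℝ)
    (hc : (∑' n : ℕ, ENNReal.ofReal (c (n + 1) ^ 2) * eLpNorm (radZ (n + 1)) 2 P ^ 2) < ⊤)
    (f : (ℤ → ℝ) → ℝ) (hf : ∀ ω, f ω = ∑' n : ℕ, c (n + 1) * radZ (n + 1) ω) :
    (∀ k : ℕ, 1 ≤ k → ∀ i : ℤ, (i = -(2 * (k : ℤ) - 1) ∨ i = -(2 * (k : ℤ))) →
        2⁻¹ * (∑' j : {j : ℕ // k ≤ j}, ENNReal.ofReal (c j ^ 2) * eLpNorm (radZ j) 2 P ^ 2)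
          ≤ physDelta P i f ^ 2) ∧
      (∑' j : ℕ, ((j : ℝ≥0∞) + 1) * ENNReal.ofReal (c (j + 1) ^ 2)
            * eLpNorm (radZ (j + 1)) 2 P ^ 2)
        ≤ ∑' i : {i : ℤ // i ≤ -1}, physDelta P i f ^ 2 := by
  obtain ⟨hprob, _hindep, hmap⟩ := hP
  exact statement18' P hprob hmap c f hf
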